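/- For indices i ∈ {1,…,D} and j ∈ {1,…,R}, the real function f(t) = ℓ evaluated with the entry V_{ij} of V replaced by t (keeping all other entries of A, V, μ fixed) is twice differentiable at t = V_{ij} and its second derivative equals Σ_{ii} − Σ_{ii}·(vᵀ·Σ·v) − ((Σ·v)_i)² − r_i², where v ∈ ℝ^D is the j-th column of V, Σ = Ω⁻¹ and r = y − μ. -/

import Mathlib

open Matrix

/-- Multivariate Gaussian log-likelihood in the low-rank precision parametrization
`Ω = A + V·Vᵀ` with `A = diagonal a`:
`ℓ = -(D/2)·log(2π) + (1/2)·log(det Ω) - (1/2)·(y-μ)ᵀ Ω (y-μ)`. -/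
noncomputable def gaussLRLL (D R : ℕ) (y μ : Fin D → ℝ) (a : Fin D → ℝ)
    (V : Matrix (Fin D) (Fin R) ℝ) : ℝ :=
  -((D : ℝ) / 2) * Real.log (2 * Real.pi)
    + (1 / 2) * Real.log (Matrix.diagonal a + V * V.transpose).det
    - (1 / 2) * ((y - μ) ⬝ᵥ (Matrix.diagonal a + V * V.transpose).mulVec (y - μ))

/-- The matrix `V` with its `(i,j)`-entry replaced by `t`. -/
def updEntryV {D R : ℕ} (V : Matrix (Fin D) (Fin R) ℝ) (i : Fin D) (j : Fin R) (t : ℝ) :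
    Matrix (Fin D) (Fin R) ℝ :=
  Matrix.of fun k l => if k = i ∧ l = j then t else V k l

lemma aux_entry {D : ℕ} (S : Matrix (Fin D) (Fin D) ℝ) (X Y : Matrix (Fin D) (Fin 2) ℝ)
    (p q : Fin 2) :
    (Xᵀ * S * Y) p q = (fun k => X k p) ⬝ᵥ S *ᵥ (fun k => Y k q) := by
  simp only [Matrix.mul_apply, Matrix.transpose_apply, dotProduct, Matrix.mulVec,
    Finset.sum_mul, Finset.mul_sum]
  rw [Finset.sum_comm]
  exact Finset.sum_congr rfl fun k _ => Finset.sum_congr rfl fun m _ => by ring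

lemma aux_prod {D R : ℕ} (V : Matrix (Fin D) (Fin R) ℝ) (i : Fin D) (j : Fin R) (t : ℝ) :
    updEntryV V i j t * (updEntryV V i j t)ᵀ
      = V * Vᵀ + (Matrix.vecMulVec (fun k => if k = i then t else V k j)
          (fun k => if k = i then t else V k j)
        - Matrix.vecMulVec (fun k => V k j) (fun k => V k j)) := by
  ext k l
  simp only [Matrix.mul_apply, Matrix.transpose_apply, Matrix.add_apply, Matrix.sub_apply,
    Matrix.vecMulVec_apply, updEntryV, Matrix.of_apply]
  have key : ∀ m, (if k = i ∧ m = j then t else V k m) * (if l = i ∧ m = j then t else V l m)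
      = V k m * V l m + (if m = j then
          (if k = i then t else V k j) * (if l = i then t else V l j) - V k j * V l j else 0) := by
    intro m
    by_cases hm : m = j
    · subst hm
      by_cases hk : k = i <;> by_cases hl : l = i <;> simp [hk, hl]
    · simp [hm]
  simp only [key, Finset.sum_add_distrib, Finset.sum_ite_eq' Finset.univ j, Finset.mem_univ,
    if_true]

lemma aux_det {D R : ℕ} (a : Fin D → ℝ) (ha : ∀ k, 0 < a k) (V : Matrix (Fin D) (Fin R) ℝ)
    (i : Fin D) (j : Fin R) (t : ℝ) :
    (Matrix.diagonal a + updEntryV V i j t * (updEntryV V i j t)ᵀ).det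
      = (Matrix.diagonal a + V * Vᵀ).det *
        (1 + 2 * (((Matrix.diagonal a + V * Vᵀ)⁻¹ *ᵥ fun k => V k j) i) * (t - V i j)
          + ((Matrix.diagonal a + V * Vᵀ)⁻¹ i i
              - (Matrix.diagonal a + V * Vᵀ)⁻¹ i i *
                ((fun k => V k j) ⬝ᵥ (Matrix.diagonal a + V * Vᵀ)⁻¹ *ᵥ fun k => V k j)
              + (((Matrix.diagonal a + V * Vᵀ)⁻¹ *ᵥ fun k => V k j) i) ^ 2) * (t - V i j) ^ 2) := by
  set Ω : Matrix (Fin D) (Fin D) ℝ := Matrix.diagonal a + V * Vᵀ with hΩdef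
  have hΩ : Ω.PosDef := by
    refine (Matrix.posDef_diagonal_iff.mpr ha).add_posSemidef ?_
    simpa [Matrix.conjTranspose_eq_transpose_of_trivial] using
      Matrix.posSemidef_self_mul_conjTranspose V
  have hdu : IsUnit Ω.det := hΩ.det_pos.ne'.isUnit
  set Sm : Matrix (Fin D) (Fin D) ℝ := Ω⁻¹ with hSdef
  have hsymmΩ : Ωᵀ = Ω := by
    rw [hΩdef]
    simp [Matrix.transpose_add, Matrix.transpose_mul]
  have hsymm : Smᵀ = Sm := by rw [hSdef, Matrix.transpose_nonsing_inv, hsymmΩ]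
  have hsym' : ∀ k l, Sm l k = Sm k l := by
    intro k l
    have := congrFun (congrFun hsymm k) l
    simpa [Matrix.transpose_apply] using this
  set v : Fin D → ℝ := fun k => V k j with hvdef
  set s : ℝ := V i j with hsdef
  set α : ℝ := (Sm *ᵥ v) i with hαdef
  set β : ℝ := Sm i i with hβdef
  set q : ℝ := v ⬝ᵥ Sm *ᵥ v with hqdef
  set x : ℝ := t - s with hxdef
  set w : Fin D → ℝ := fun k => if k = i then t else V k j with hwdef
  -- basic dot product facts
  have hw' : w = v + x • (Pi.single i 1 : Fin D → ℝ) := by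
    ext k
    by_cases hk : k = i
    · subst hk; simp [hwdef, hvdef, hxdef, hsdef]
    · simp [hwdef, hvdef, hk, Pi.single_eq_of_ne hk]
  have hSe : Sm *ᵥ Pi.single i 1 = fun k => Sm k i := by
    rw [Matrix.mulVec_single]; simp; rfl
  have d1 : ∀ u : Fin D → ℝ, Pi.single i (1:ℝ) ⬝ᵥ u = u i := by
    intro u; rw [single_dotProduct, one_mul]
  have d2 : v ⬝ᵥ (Sm *ᵥ Pi.single i 1) = α := by
    rw [hSe, hαdef]
    simp only [dotProduct, Matrix.mulVec, dotProduct]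
    exact Finset.sum_congr rfl fun k _ => by rw [hsym' k i]; ring
  have d3 : Pi.single i (1:ℝ) ⬝ᵥ (Sm *ᵥ v) = α := d1 _
  have d4 : Pi.single i (1:ℝ) ⬝ᵥ (Sm *ᵥ Pi.single i 1) = β := by
    rw [d1, hSe]
  have dquad : ∀ x1 x2 : ℝ,
      (v + x1 • (Pi.single i 1 : Fin D → ℝ)) ⬝ᵥ (Sm *ᵥ (v + x2 • (Pi.single i 1 : Fin D → ℝ)))
        = q + x2 * α + x1 * α + x1 * x2 * β := by
    intro x1 x2
    rw [Matrix.mulVec_add, Matrix.mulVec_smul, dotProduct_add, add_dotProduct, add_dotProduct,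
      dotProduct_smul, dotProduct_smul, smul_dotProduct, smul_dotProduct, d2, d3, d4]
    simp only [smul_eq_mul, hqdef]
    ring
  -- the rank-two factors
  set U : Matrix (Fin D) (Fin 2) ℝ := Matrix.of fun k p => if p = 0 then w k else v k with hU
  set W : Matrix (Fin D) (Fin 2) ℝ := Matrix.of fun k p => if p = 0 then w k else -(v k) with hW
  have hUW : U * Wᵀ = Matrix.vecMulVec w w - Matrix.vecMulVec v v := by
    ext k l
    simp [hU, hW, Matrix.mul_apply, Fin.sum_univ_two, Matrix.vecMulVec_apply]
    ring
  have hsplit : Matrix.diagonal a + updEntryV V i j t * (updEntryV V i j t)ᵀ = Ω + U * Wᵀ := by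
    rw [aux_prod V i j t, hUW, hΩdef]
    abel
  rw [hsplit, Matrix.det_add_mul U Wᵀ hdu, ← hSdef]
  congr 1
  -- compute 2×2 determinant
  rw [Matrix.det_fin_two]
  have e00 : ((1 + Wᵀ * Sm * U : Matrix (Fin 2) (Fin 2) ℝ)) 0 0 = 1 + (q + x * α + x * α + x * x * β) := by
    rw [Matrix.add_apply, Matrix.one_apply_eq, aux_entry]
    congr 1
    have h1 : (fun k => W k 0) = w := by funext k; simp [hW]
    have h2 : (fun k => U k 0) = w := by funext k; simp [hU]
    rw [h1, h2, hw', dquad]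
  have e01 : ((1 + Wᵀ * Sm * U : Matrix (Fin 2) (Fin 2) ℝ)) 0 1 = q + x * α := by
    rw [Matrix.add_apply, Matrix.one_apply_ne (by decide), aux_entry, zero_add]
    have h1 : (fun k => W k 0) = w := by funext k; simp [hW]
    have h2 : (fun k => U k 1) = v := by funext k; simp [hU]
    rw [h1, h2, hw']
    have := dquad x 0
    simpa using this
  have e10 : ((1 + Wᵀ * Sm * U : Matrix (Fin 2) (Fin 2) ℝ)) 1 0 = -(q + x * α) := by
    rw [Matrix.add_apply, Matrix.one_apply_ne (by decide), aux_entry, zero_add]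
    have h1 : (fun k => W k 1) = -v := by funext k; simp [hW]
    have h2 : (fun k => U k 0) = w := by funext k; simp [hU]
    rw [h1, h2, hw', neg_dotProduct]
    have := dquad 0 x
    simp at this
    rw [this]
  have e11 : ((1 + Wᵀ * Sm * U : Matrix (Fin 2) (Fin 2) ℝ)) 1 1 = 1 - q := by
    rw [Matrix.add_apply, Matrix.one_apply_eq, aux_entry]
    have h1 : (fun k => W k 1) = -v := by funext k; simp [hW]
    have h2 : (fun k => U k 1) = v := by funext k; simp [hU]
    rw [h1, h2, neg_dotProduct, hqdef]
    ring
  rw [e00, e01, e10, e11]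
  ring

lemma aux_vecMulVec {D : ℕ} (r u z : Fin D → ℝ) :
    r ⬝ᵥ (Matrix.vecMulVec u z) *ᵥ r = (r ⬝ᵥ u) * (z ⬝ᵥ r) := by
  have h : (Matrix.vecMulVec u z) *ᵥ r = (z ⬝ᵥ r) • u := by
    ext k
    simp [Matrix.vecMulVec_apply, Matrix.mulVec, dotProduct, Finset.mul_sum, mul_assoc,
      mul_comm, mul_left_comm]
  rw [h, dotProduct_smul, smul_eq_mul, mul_comm]

lemma aux_quad {D R : ℕ} (a : Fin D → ℝ) (y μ : Fin D → ℝ) (V : Matrix (Fin D) (Fin R) ℝ)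
    (i : Fin D) (j : Fin R) (t : ℝ) :
    (y - μ) ⬝ᵥ (Matrix.diagonal a + updEntryV V i j t * (updEntryV V i j t)ᵀ) *ᵥ (y - μ)
      = (y - μ) ⬝ᵥ (Matrix.diagonal a + V * Vᵀ) *ᵥ (y - μ)
        + 2 * ((fun k => V k j) ⬝ᵥ (y - μ)) * (y i - μ i) * (t - V i j)
        + (y i - μ i) ^ 2 * (t - V i j) ^ 2 := by
  rw [aux_prod V i j t]
  have hre : Matrix.diagonal a + (V * Vᵀ
      + (Matrix.vecMulVec (fun k => if k = i then t else V k j)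
          (fun k => if k = i then t else V k j)
        - Matrix.vecMulVec (fun k => V k j) (fun k => V k j)))
      = (Matrix.diagonal a + V * Vᵀ)
        + (Matrix.vecMulVec (fun k => if k = i then t else V k j)
            (fun k => if k = i then t else V k j)
          - Matrix.vecMulVec (fun k => V k j) (fun k => V k j)) := by abel
  rw [hre, Matrix.add_mulVec, Matrix.sub_mulVec, dotProduct_add, dotProduct_sub,
    aux_vecMulVec, aux_vecMulVec]
  have hw : (fun k => if k = i then t else V k j)
      = (fun k => V k j) + (t - V i j) • (Pi.single i 1 : Fin D → ℝ) := by
    ext k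
    by_cases hk : k = i
    · subst hk; simp
    · simp [hk, Pi.single_eq_of_ne hk]
  have h1 : ∀ u : Fin D → ℝ, Pi.single i (1:ℝ) ⬝ᵥ u = u i := by
    intro u; rw [single_dotProduct, one_mul]
  have h2 : ∀ u : Fin D → ℝ, u ⬝ᵥ Pi.single i (1:ℝ) = u i := by
    intro u; rw [dotProduct_single, mul_one]
  rw [hw]
  rw [add_dotProduct, smul_dotProduct, h1, dotProduct_add, dotProduct_smul, h2]
  have h3 : (y - μ) i = y i - μ i := rfl
  have h4 : (y - μ) ⬝ᵥ (fun k => V k j) = (fun k => V k j) ⬝ᵥ (y - μ) := dotProduct_comm _ _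
  rw [h3, h4]
  simp only [smul_eq_mul]
  ring

/-- Second partial derivative of the low-rank Gaussian log-likelihood with respect to the
entry `V_{ij}`: the map `t ↦ ℓ(V(t))` is twice differentiable at `t = V i j` and its
second derivative equals `Σ_{ii} - Σ_{ii}·(vᵀ Σ v) - ((Σ v)_i)² - r_i²`, where `v` is the
`j`-th column of `V`, `Σ = Ω⁻¹` and `r = y - μ`. -/
theorem gaussLR_deriv2_V (D R : ℕ) (hD : 1 ≤ D) (y μ : Fin D → ℝ)
    (a : Fin D → ℝ) (ha : ∀ k, 0 < a k)
    (V : Matrix (Fin D) (Fin R) ℝ) (i : Fin D) (j : Fin R) :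
    (∀ᶠ t in nhds (V i j),
        DifferentiableAt ℝ (fun t : ℝ => gaussLRLL D R y μ a (updEntryV V i j t)) t) ∧
      HasDerivAt (deriv (fun t : ℝ => gaussLRLL D R y μ a (updEntryV V i j t)))
        (((Matrix.diagonal a + V * V.transpose)⁻¹) i i
          - ((Matrix.diagonal a + V * V.transpose)⁻¹) i i *
              ((fun k => V k j) ⬝ᵥ
                (Matrix.diagonal a + V * V.transpose)⁻¹.mulVec (fun k => V k j))
          - ((Matrix.diagonal a + V * V.transpose)⁻¹.mulVec (fun k => V k j) i) ^ 2
          - (y i - μ i) ^ 2)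
        (V i j) := by
  have hΩ : (Matrix.diagonal a + V * Vᵀ).PosDef := by
    refine (Matrix.posDef_diagonal_iff.mpr ha).add_posSemidef ?_
    simpa [Matrix.conjTranspose_eq_transpose_of_trivial] using
      Matrix.posSemidef_self_mul_conjTranspose V
  set s : ℝ := V i j with hs
  set d : ℝ := (Matrix.diagonal a + V * Vᵀ).det with hdd
  set α : ℝ := ((Matrix.diagonal a + V * Vᵀ)⁻¹ *ᵥ fun k => V k j) i with hα
  set β : ℝ := (Matrix.diagonal a + V * Vᵀ)⁻¹ i i with hβ
  set q : ℝ := (fun k => V k j) ⬝ᵥ (Matrix.diagonal a + V * Vᵀ)⁻¹ *ᵥ fun k => V k j with hq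
  set γ : ℝ := β - β * q + α ^ 2 with hγ
  set ρ : ℝ := (fun k => V k j) ⬝ᵥ (y - μ) with hρ
  set ri : ℝ := y i - μ i with hri
  set q₀ : ℝ := (y - μ) ⬝ᵥ (Matrix.diagonal a + V * Vᵀ) *ᵥ (y - μ) with hq₀
  set c₀ : ℝ := -((D : ℝ) / 2) * Real.log (2 * Real.pi) with hc₀
  have hd : 0 < d := hΩ.det_pos
  have hd0 : d ≠ 0 := hd.ne'
  -- the global closed form
  set F : ℝ → ℝ := fun t => c₀
      + (1 / 2) * Real.log (d * (1 + 2 * α * (t - s) + γ * (t - s) ^ 2))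
      - (1 / 2) * (q₀ + 2 * ρ * ri * (t - s) + ri ^ 2 * (t - s) ^ 2) with hFdef
  have hgF : (fun t : ℝ => gaussLRLL D R y μ a (updEntryV V i j t)) = F := by
    funext t
    unfold gaussLRLL
    rw [hFdef]
    simp only
    rw [aux_det a ha V i j t, aux_quad a y μ V i j t]
  -- derivative helpers
  have hlin : ∀ (c e t : ℝ), HasDerivAt (fun u : ℝ => c + e * (u - s)) e t := by
    intro c e t
    simpa using (((hasDerivAt_id t).sub_const s).const_mul e).const_add c
  have hquadf : ∀ (c e f t : ℝ),
      HasDerivAt (fun u : ℝ => c + e * (u - s) + f * (u - s) ^ 2) (e + f * (2 * (t - s))) t := by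
    intro c e f t
    have h2 := (((hasDerivAt_id t).sub_const s).pow 2).const_mul f
    have := (hlin c e t).add h2
    convert this using 1
    · rfl
    · rfl
    · rfl
    simp only [id_eq]
    ring
  set F' : ℝ → ℝ := fun t =>
      (1 / 2) * (d * (2 * α + γ * (2 * (t - s))) / (d * (1 + 2 * α * (t - s) + γ * (t - s) ^ 2)))
      - (ρ * ri + ri ^ 2 * (t - s)) with hF'def
  have hden : ∀ t : ℝ, HasDerivAt (fun u : ℝ => d * (1 + 2 * α * (u - s) + γ * (u - s) ^ 2))
      (d * (2 * α + γ * (2 * (t - s)))) t := by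
    intro t
    exact (hquadf 1 (2 * α) γ t).const_mul d
  have hev : ∀ᶠ t in nhds s, 0 < d * (1 + 2 * α * (t - s) + γ * (t - s) ^ 2) := by
    have hc : ContinuousAt (fun t : ℝ => d * (1 + 2 * α * (t - s) + γ * (t - s) ^ 2)) s := by
      fun_prop
    have h0 : (0:ℝ) < d * (1 + 2 * α * (s - s) + γ * (s - s) ^ 2) := by
      simp [hd]
    exact hc (lt_mem_nhds h0)
  have hFd : ∀ t : ℝ, 0 < d * (1 + 2 * α * (t - s) + γ * (t - s) ^ 2) →
      HasDerivAt F (F' t) t := by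
    intro t ht
    have hlog : HasDerivAt (fun u : ℝ => Real.log (d * (1 + 2 * α * (u - s) + γ * (u - s) ^ 2)))
        (d * (2 * α + γ * (2 * (t - s))) / (d * (1 + 2 * α * (t - s) + γ * (t - s) ^ 2))) t :=
      (hden t).log ht.ne'
    have hquad2 := hquadf q₀ (2 * ρ * ri) (ri ^ 2) t
    have := ((hlog.const_mul (1/2 : ℝ)).const_add c₀).sub (hquad2.const_mul (1/2 : ℝ))
    rw [hFdef, hF'def]
    convert this using 1
    · rfl
    · rfl
    · rfl
    ring
  have hdiff : ∀ᶠ t in nhds s,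
      DifferentiableAt ℝ (fun t : ℝ => gaussLRLL D R y μ a (updEntryV V i j t)) t := by
    filter_upwards [hev] with t ht
    rw [hgF]
    exact (hFd t ht).differentiableAt
  refine ⟨hdiff, ?_⟩
  have hderiveq : deriv (fun t : ℝ => gaussLRLL D R y μ a (updEntryV V i j t)) =ᶠ[nhds s] F' := by
    filter_upwards [hev] with t ht
    rw [hgF]
    exact (hFd t ht).deriv
  have h2nd : HasDerivAt F' (β - β * q - α ^ 2 - ri ^ 2) s := by
    have hnum : HasDerivAt (fun u : ℝ => d * (2 * α + γ * (2 * (u - s)))) (d * (2 * γ)) s := by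
      have := (hlin (2 * α) (2 * γ) s).const_mul d
      have heq : (fun u : ℝ => d * (2 * α + γ * (2 * (u - s))))
          = fun u : ℝ => d * (2 * α + 2 * γ * (u - s)) := by funext u; ring
      rw [heq]
      exact this
    have hden0 : d * (1 + 2 * α * (s - s) + γ * (s - s) ^ 2) ≠ 0 := by
      simp [hd0]
    have hdiv := hnum.div (hden s) hden0
    have hlin2 : HasDerivAt (fun u : ℝ => ρ * ri + ri ^ 2 * (u - s)) (ri ^ 2) s := hlin _ _ s
    have := (hdiv.const_mul (1/2 : ℝ)).sub hlin2
    rw [hF'def]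
    convert this using 1
    · rfl
    · rfl
    · rfl
    rw [hγ]
    have hss : s - s = (0:ℝ) := sub_self s
    rw [hss]
    field_simp
    ring
  exact h2nd.congr_of_eventuallyEq hderiveq
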